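/- For every natural number k ≥ 1 and every x ∈ [-1,1], writing Φ ∈ ℝ^k with φ₁ = (1-k)π/2 and φ_j = π/2 for 2 ≤ j ≤ k, the (1,1) entry of the matrix product ∏_{j=1}^{k} ( [[e^{iφ_j}, 0],[0, e^{-iφ_j}]] · [[x, √(1-x²)],[√(1-x²), -x]] ) equals T_k(x), the k-th Chebyshev polynomial of the first kind. -/

import Mathlib

open Polynomial

lemma rotPow (θ : ℝ) (n : ℕ) :
    (!![(Real.cos θ : ℂ), (Real.sin θ : ℂ); -(Real.sin θ : ℂ), (Real.cos θ : ℂ)]) ^ n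
    = !![(Real.cos (n*θ) : ℂ), (Real.sin (n*θ) : ℂ);
        -(Real.sin (n*θ) : ℂ), (Real.cos (n*θ) : ℂ)] := by
  induction n with
  | zero =>
      simp [pow_zero]
      ext i j
      fin_cases i <;> fin_cases j <;> simp [Matrix.one_apply]
  | succ n ih =>
      rw [pow_succ, ih]
      have h : ((n : ℝ) + 1) * θ = n * θ + θ := by ring
      ext i j
      fin_cases i <;> fin_cases j <;>
        simp [Matrix.mul_apply, Fin.sum_univ_two, Nat.cast_succ, h,
          Real.cos_add, Real.sin_add] <;> ring

lemma I_pow_exp (m : ℕ) :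
    Complex.exp (Complex.I * ((1 - ((m : ℝ) + 1)) * Real.pi / 2)) * Complex.I ^ m = 1 := by
  have hI : Complex.I ^ m = Complex.exp ((m : ℂ) * ((Real.pi / 2 : ℝ) * Complex.I)) := by
    rw [Complex.exp_nat_mul]
    congr 1
    rw [Complex.exp_mul_I]
    push_cast
    rw [Complex.cos_pi_div_two, Complex.sin_pi_div_two]
    ring
  rw [hI, ← Complex.exp_add, ← Complex.exp_zero]
  congr 1
  push_cast
  ring

theorem stmt_18 (k : ℕ) (hk : 1 ≤ k) (x : ℝ) (hx : x ∈ Set.Icc (-1 : ℝ) 1) :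
    ∀ φ : ℕ → ℝ,
      (∀ j, φ j = if j = 0 then (1 - (k : ℝ)) * Real.pi / 2 else Real.pi / 2) →
      (((List.range k).map (fun j =>
          (!![Complex.exp (Complex.I * (φ j)), 0;
              0, Complex.exp (-(Complex.I * (φ j)))] : Matrix (Fin 2) (Fin 2) ℂ) *
          (!![(x : ℂ), ((Real.sqrt (1 - x ^ 2) : ℝ) : ℂ);
              ((Real.sqrt (1 - x ^ 2) : ℝ) : ℂ), (-x : ℂ)] : Matrix (Fin 2) (Fin 2) ℂ))).prod)
          0 0
        = (((Chebyshev.T ℝ k).eval x : ℝ) : ℂ) := by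
  intro φ hφ
  obtain ⟨m, rfl⟩ : ∃ m, k = m + 1 := ⟨k - 1, (Nat.succ_pred_eq_of_pos hk).symm⟩
  set θ := Real.arccos x with hθ
  have hcos : Real.cos θ = x := Real.cos_arccos hx.1 hx.2
  have hsin : Real.sin θ = Real.sqrt (1 - x ^ 2) := by
    rw [hθ, Real.sin_arccos]
  -- abbreviations
  set X : Matrix (Fin 2) (Fin 2) ℂ :=
    !![(x : ℂ), ((Real.sqrt (1 - x ^ 2) : ℝ) : ℂ);
       ((Real.sqrt (1 - x ^ 2) : ℝ) : ℂ), (-x : ℂ)] with hX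
  set f : ℕ → Matrix (Fin 2) (Fin 2) ℂ := fun j =>
    (!![Complex.exp (Complex.I * (φ j)), 0;
        0, Complex.exp (-(Complex.I * (φ j)))]) * X with hf
  -- the tail factors are all equal to I • R
  set R : Matrix (Fin 2) (Fin 2) ℂ :=
    !![(Real.cos θ : ℂ), (Real.sin θ : ℂ); -(Real.sin θ : ℂ), (Real.cos θ : ℂ)] with hR
  have htail : ∀ j : ℕ, f (j + 1) = Complex.I • R := by
    intro j
    have hφj : φ (j + 1) = Real.pi / 2 := by rw [hφ]; simp
    have hexp : Complex.exp (Complex.I * (Real.pi / 2 : ℝ)) = Complex.I := by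
      rw [mul_comm, Complex.exp_mul_I]
      push_cast
      rw [Complex.cos_pi_div_two, Complex.sin_pi_div_two]
      ring
    have hexp' : Complex.exp (-(Complex.I * (Real.pi / 2 : ℝ))) = -Complex.I := by
      rw [Complex.exp_neg, hexp, Complex.inv_I]
    rw [hf]
    simp only [hφj, hexp, hexp', hX, hR]
    ext i j
    fin_cases i <;> fin_cases j <;>
      simp [Matrix.mul_apply, Fin.sum_univ_two, hcos, hsin] <;> ring
  have hrange : List.range (m + 1) = 0 :: (List.range m).map Nat.succ :=
    List.range_succ_eq_map
  rw [hrange, List.map_cons, List.prod_cons, List.map_map]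
  have hconst : ((List.range m).map (f ∘ Nat.succ)) = List.replicate m (Complex.I • R) := by
    rw [List.eq_replicate_iff]
    constructor
    · simp
    · intro b hb
      simp only [List.mem_map] at hb
      obtain ⟨j, -, rfl⟩ := hb
      exact htail j
  rw [hconst, List.prod_replicate, _root_.smul_pow, rotPow]
  -- now compute the (0,0) entry
  have hφ0 : φ 0 = (1 - ((m : ℝ) + 1)) * Real.pi / 2 := by rw [hφ]; push_cast; simp
  have hT : (Chebyshev.T ℝ (((m+1 : ℕ) : ℤ))).eval x = Real.cos ((m + 1) * θ) := by
    rw [← hcos]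
    have h2 := Polynomial.Chebyshev.T_real_cos θ (m + 1)
    push_cast at h2 ⊢
    rw [h2]
  rw [hT]
  have hentry : (f 0 * Complex.I ^ m •
      !![(Real.cos (m*θ) : ℂ), (Real.sin (m*θ) : ℂ);
        -(Real.sin (m*θ) : ℂ), (Real.cos (m*θ) : ℂ)]) 0 0
      = Complex.exp (Complex.I * (φ 0)) * Complex.I ^ m *
        ((x : ℂ) * Real.cos (m*θ) - (Real.sqrt (1 - x ^ 2) : ℝ) * Real.sin (m*θ)) := by
    rw [hf, hX]
    simp [Matrix.mul_apply, Fin.sum_univ_two]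
    ring
  have key : Complex.exp (Complex.I * ((((1 - ((m:ℝ) + 1)) * Real.pi / 2) : ℝ) : ℂ)) *
      Complex.I ^ m = 1 := by
    have := I_pow_exp m
    push_cast at this ⊢
    convert this using 4
  rw [hentry, hφ0, key]
  have haddangle : ((m : ℝ) + 1) * θ = m * θ + θ := by ring
  rw [haddangle, Real.cos_add, hcos, hsin]
  push_cast
  ring
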